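/- Let X be a supercritical offspring distribution with X(0) > 0, let (X^N_k) be the censored Galton-Watson process at level N started at N, A_k its successive return times to N, and T = sup{k ≥ 0 : A_k < ∞}. Then T + 1 has the geometric distribution with parameter q_N, i.e. P(T = k) = (1 - q_N)^k q_N for all k ≥ 0, where q_N = P(X^N_k < N for all k > 0). -/

import Mathlib

open MeasureTheory ProbabilityTheory Filter
open scoped ENNReal

/-- Galton-Watson process with offspring array `ξ`, started from `a` individuals. -/
noncomputable def gw {Ω : Type*} (ξ : ℕ × ℕ → Ω → ℕ) (a : ℕ) : ℕ → Ω → ℕ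
  | 0 => fun _ => a
  | k + 1 => fun ω => ∑ i ∈ Finset.range (gw ξ a k ω), ξ (k, i) ω

/-- Galton-Watson process censored at level `N`, started at `N`. -/
noncomputable def cgw {Ω : Type*} (ξ : ℕ × ℕ → Ω → ℕ) (N : ℕ) : ℕ → Ω → ℕ
  | 0 => fun _ => N
  | k + 1 => fun ω =>
      if 0 < cgw ξ N k ω then min N (∑ i ∈ Finset.range (cgw ξ N k ω), ξ (k, i) ω) else 0

/-- Successive return times to `N` of the censored process (`⊤` if no further return). -/
noncomputable def retA {Ω : Type*} (ξ : ℕ × ℕ → Ω → ℕ) (N : ℕ) : ℕ → Ω → ℕ∞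
  | 0 => fun _ => 0
  | k + 1 => fun ω =>
      sInf {m : ℕ∞ | retA ξ N k ω < m ∧ ∃ ℓ : ℕ, m = (ℓ : ℕ∞) ∧ cgw ξ N ℓ ω = N}

/-- Survival time of the censored process: first hitting time of `0`. -/
noncomputable def UN {Ω : Type*} (ξ : ℕ × ℕ → Ω → ℕ) (N : ℕ) (ω : Ω) : ℕ∞ :=
  sInf {m : ℕ∞ | ∃ k : ℕ, m = (k : ℕ∞) ∧ cgw ξ N k ω = 0}

/-- Last time the censored process is at level `N`. -/
noncomputable def VN {Ω : Type*} (ξ : ℕ × ℕ → Ω → ℕ) (N : ℕ) (ω : Ω) : ℕ∞ :=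
  sSup {m : ℕ∞ | ∃ k : ℕ, m = (k : ℕ∞) ∧ cgw ξ N k ω = N}

/-- The number of finite return times: `T = sup {k : A_k < ∞}`. -/
noncomputable def TT {Ω : Type*} (ξ : ℕ × ℕ → Ω → ℕ) (N : ℕ) (ω : Ω) : ℕ∞ :=
  sSup {m : ℕ∞ | ∃ k : ℕ, m = (k : ℕ∞) ∧ retA ξ N k ω < ⊤}

section helpers

lemma enat_sInf_mem {S : Set ℕ∞} (h : sInf S ≠ ⊤) : sInf S ∈ S := by
  classical
  have hne : ∃ n : ℕ, (n : ℕ∞) ∈ S := by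
    by_contra hc
    push_neg at hc
    apply h
    rw [sInf_eq_top]
    intro a ha
    induction a using ENat.recTopCoe with
    | top => rfl
    | coe n => exact absurd ha (hc n)
  have hn0 : ((Nat.find hne : ℕ) : ℕ∞) ∈ S := Nat.find_spec hne
  have : sInf S = ((Nat.find hne : ℕ) : ℕ∞) := by
    refine le_antisymm (sInf_le hn0) (le_sInf ?_)
    intro b hb
    induction b using ENat.recTopCoe with
    | top => exact le_top
    | coe nb => exact_mod_cast Nat.find_min' hne hb
  rw [this]; exact hn0

lemma cgw_le {Ω : Type*} (ξ : ℕ × ℕ → Ω → ℕ) (N k : ℕ) (ω : Ω) : cgw ξ N k ω ≤ N := by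
  cases k with
  | zero => simp [cgw]
  | succ k =>
    simp only [cgw]
    split
    · exact min_le_left _ _
    · exact Nat.zero_le _

lemma cgw_congr {Ω Ω' : Type*} {ξ : ℕ × ℕ → Ω → ℕ} {ξ' : ℕ × ℕ → Ω' → ℕ} {N : ℕ}
    {ω : Ω} {ω' : Ω'} {m : ℕ}
    (hag : ∀ j < m, ∀ i < N, ξ (j, i) ω = ξ' (j, i) ω') :
    ∀ k ≤ m, cgw ξ N k ω = cgw ξ' N k ω' := by
  intro k
  induction k with
  | zero => intro _; rfl
  | succ k ih =>
    intro hk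
    have hc := ih (by omega)
    have hsum : ∑ i ∈ Finset.range (cgw ξ N k ω), ξ (k, i) ω
        = ∑ i ∈ Finset.range (cgw ξ N k ω), ξ' (k, i) ω' := by
      refine Finset.sum_congr rfl fun i hi => ?_
      exact hag k (by omega) i (lt_of_lt_of_le (Finset.mem_range.mp hi) (cgw_le ξ N k ω))
    simp only [cgw]
    rw [← hc, hsum]

end helpers

section retAlemmas

variable {Ω Ω' : Type*} {ξ : ℕ × ℕ → Ω → ℕ} {ξ' : ℕ × ℕ → Ω' → ℕ} {N : ℕ} {ω : Ω} {ω' : Ω'}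

lemma retA_succ_def (k : ℕ) :
    retA ξ N (k + 1) ω
      = sInf {t : ℕ∞ | retA ξ N k ω < t ∧ ∃ ℓ : ℕ, t = (ℓ : ℕ∞) ∧ cgw ξ N ℓ ω = N} := rfl

lemma retA_le_succ (k : ℕ) : retA ξ N k ω ≤ retA ξ N (k + 1) ω := by
  rw [retA_succ_def]
  exact le_sInf fun t ht => ht.1.le

lemma retA_mono {j k : ℕ} (h : j ≤ k) : retA ξ N j ω ≤ retA ξ N k ω := by
  induction k with
  | zero => simp_all
  | succ k ih =>
    rcases Nat.lt_or_ge j (k+1) with h' | h'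
    · exact le_trans (ih (by omega)) (retA_le_succ k)
    · have : j = k + 1 := by omega
      simp [this]

lemma retA_top_succ {k : ℕ} (h : retA ξ N k ω = ⊤) : retA ξ N (k + 1) ω = ⊤ := by
  rw [retA_succ_def, sInf_eq_top]
  intro t ht
  rw [h] at ht
  exact absurd ht.1 not_top_lt

lemma retA_succ_mem {k : ℕ} (h : retA ξ N (k + 1) ω ≠ ⊤) :
    retA ξ N (k + 1) ω
      ∈ {t : ℕ∞ | retA ξ N k ω < t ∧ ∃ ℓ : ℕ, t = (ℓ : ℕ∞) ∧ cgw ξ N ℓ ω = N} := by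
  rw [retA_succ_def] at h ⊢
  exact enat_sInf_mem h

lemma lt_retA_succ {k : ℕ} {m : ℕ∞} (hm : m ≠ ⊤) (h : m ≤ retA ξ N k ω) :
    m < retA ξ N (k + 1) ω := by
  rw [← ENat.add_one_le_iff hm, retA_succ_def]
  refine le_sInf fun t ht => ?_
  rw [ENat.add_one_le_iff hm]
  exact lt_of_le_of_lt h ht.1

lemma retA_dichotomy {m : ℕ}
    (hag : ∀ j < m, ∀ i < N, ξ (j, i) ω = ξ' (j, i) ω') (k : ℕ) :
    retA ξ N k ω = retA ξ' N k ω'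
      ∨ ((m : ℕ∞) < retA ξ N k ω ∧ (m : ℕ∞) < retA ξ' N k ω') := by
  induction k with
  | zero => left; rfl
  | succ k ih =>
    rcases ih with heq | ⟨h1, h2⟩
    · by_cases ham : (m : ℕ∞) ≤ retA ξ N k ω
      · right
        refine ⟨lt_retA_succ (by simp) ham, lt_retA_succ (by simp) ?_⟩
        rwa [← heq]
      · -- retA ξ N k ω < m, in particular it is a natural number
        push_neg at ham
        set S := {t : ℕ∞ | retA ξ N k ω < t ∧ ∃ ℓ : ℕ, t = (ℓ : ℕ∞) ∧ cgw ξ N ℓ ω = N}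
          with hS
        set S' := {t : ℕ∞ | retA ξ' N k ω' < t ∧ ∃ ℓ : ℕ, t = (ℓ : ℕ∞) ∧ cgw ξ' N ℓ ω' = N}
          with hS'
        have hiff : ∀ t : ℕ∞, t ≤ (m : ℕ∞) → (t ∈ S ↔ t ∈ S') := by
          rintro t htm
          constructor
          · rintro ⟨hlt, ℓ, rfl, hc⟩
            have hℓm : ℓ ≤ m := by exact_mod_cast htm
            exact ⟨by rwa [← heq], ℓ, rfl, (cgw_congr hag ℓ hℓm) ▸ hc⟩
          · rintro ⟨hlt, ℓ, rfl, hc⟩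
            have hℓm : ℓ ≤ m := by exact_mod_cast htm
            exact ⟨by rwa [heq], ℓ, rfl, (cgw_congr hag ℓ hℓm) ▸ hc⟩
        have hmemS : sInf S ≤ (m : ℕ∞) → sInf S ∈ S := fun hle =>
          enat_sInf_mem (by intro h; rw [h] at hle; simp at hle)
        have hmemS' : sInf S' ≤ (m : ℕ∞) → sInf S' ∈ S' := fun hle =>
          enat_sInf_mem (by intro h; rw [h] at hle; simp at hle)
        have hLHS : retA ξ N (k+1) ω = sInf S := by rw [retA_succ_def]
        have hRHS : retA ξ' N (k+1) ω' = sInf S' := by rw [retA_succ_def]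
        rw [hLHS, hRHS]
        by_cases hc1 : sInf S ≤ (m : ℕ∞)
        · left
          have h1' := hmemS hc1
          have h1'' : sInf S ∈ S' := (hiff _ hc1).mp h1'
          have hle1 : sInf S' ≤ sInf S := sInf_le h1''
          have h2' := hmemS' (le_trans hle1 hc1)
          have h2'' : sInf S' ∈ S := (hiff _ (le_trans hle1 hc1)).mpr h2'
          exact le_antisymm (sInf_le h2'') hle1
        · by_cases hc2 : sInf S' ≤ (m : ℕ∞)
          · exfalso
            have h2' := hmemS' hc2
            have h2'' : sInf S' ∈ S := (hiff _ hc2).mpr h2'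
            exact hc1 (le_trans (sInf_le h2'') hc2)
          · right
            push_neg at hc1 hc2
            exact ⟨hc1, hc2⟩
    · right
      exact ⟨lt_retA_succ (by simp) h1.le, lt_retA_succ (by simp) h2.le⟩

lemma retA_eq_iff_of_agree {m : ℕ}
    (hag : ∀ j < m, ∀ i < N, ξ (j, i) ω = ξ' (j, i) ω') (k : ℕ) :
    retA ξ N k ω = (m : ℕ∞) ↔ retA ξ' N k ω' = (m : ℕ∞) := by
  rcases retA_dichotomy hag k with heq | ⟨h1, h2⟩
  · rw [heq]
  · constructor
    · intro h; rw [h] at h1; exact absurd h1 (lt_irrefl _)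
    · intro h; rw [h] at h2; exact absurd h2 (lt_irrefl _)

end retAlemmas

section shift

variable {Ω : Type*} {ξ : ℕ × ℕ → Ω → ℕ} {N : ℕ} {ω : Ω}

noncomputable def shiftF {Ω : Type*} (ξ : ℕ × ℕ → Ω → ℕ) (m : ℕ) : ℕ × ℕ → Ω → ℕ :=
  fun p => ξ (p.1 + m, p.2)

lemma sInf_shift {m a : ℕ} {P Q : ℕ → Prop} (hPQ : ∀ s, Q (m + s) ↔ P s) :
    sInf {t : ℕ∞ | ((m + a : ℕ) : ℕ∞) < t ∧ ∃ ℓ : ℕ, t = (ℓ : ℕ∞) ∧ Q ℓ}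
      = (m : ℕ∞) + sInf {t : ℕ∞ | (a : ℕ∞) < t ∧ ∃ s : ℕ, t = (s : ℕ∞) ∧ P s} := by
  set S' := {t : ℕ∞ | (a : ℕ∞) < t ∧ ∃ s : ℕ, t = (s : ℕ∞) ∧ P s} with hS'
  apply le_antisymm
  · by_cases h : sInf S' = ⊤
    · rw [h]; simp
    · obtain ⟨hlt, s, hs, hPs⟩ := enat_sInf_mem h
      have has : a < s := by rw [hs] at hlt; exact_mod_cast hlt
      calc sInf {t : ℕ∞ | ((m + a : ℕ) : ℕ∞) < t ∧ ∃ ℓ : ℕ, t = (ℓ : ℕ∞) ∧ Q ℓ}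
          ≤ ((m + s : ℕ) : ℕ∞) := by
            apply sInf_le
            exact ⟨by exact_mod_cast (by omega : m + a < m + s), m + s, rfl, (hPQ s).mpr hPs⟩
        _ = (m : ℕ∞) + sInf S' := by rw [hs]; push_cast; rfl
  · apply le_sInf
    rintro t ⟨hlt, ℓ, rfl, hQ⟩
    have hma : m + a < ℓ := by exact_mod_cast hlt
    obtain ⟨s, rfl, has⟩ : ∃ s, ℓ = m + s ∧ a < s := ⟨ℓ - m, by omega, by omega⟩
    have hle : sInf S' ≤ (s : ℕ∞) :=
      sInf_le ⟨by exact_mod_cast has, s, rfl, (hPQ s).mp hQ⟩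
    calc (m : ℕ∞) + sInf S' ≤ (m : ℕ∞) + (s : ℕ∞) := add_le_add le_rfl hle
      _ = ((m + s : ℕ) : ℕ∞) := by push_cast; rfl

lemma cgw_shift {m : ℕ} (hm : cgw ξ N m ω = N) :
    ∀ ℓ, cgw (shiftF ξ m) N ℓ ω = cgw ξ N (m + ℓ) ω := by
  intro ℓ
  induction ℓ with
  | zero => simpa [cgw] using hm.symm
  | succ ℓ ih =>
    have : m + (ℓ + 1) = (m + ℓ) + 1 := by ring
    rw [this]
    show (if 0 < cgw (shiftF ξ m) N ℓ ω then
        min N (∑ i ∈ Finset.range (cgw (shiftF ξ m) N ℓ ω), shiftF ξ m (ℓ, i) ω) else 0) = _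
    simp only [cgw, ih, shiftF]
    rw [Nat.add_comm ℓ m]

lemma retA_one_mem {m : ℕ} (h1 : retA ξ N 1 ω = (m : ℕ∞)) :
    0 < m ∧ cgw ξ N m ω = N := by
  have h : retA ξ N 1 ω ≠ ⊤ := by rw [h1]; simp
  obtain ⟨hlt, ℓ, hℓ, hc⟩ := retA_succ_mem (k := 0) h
  rw [h1] at hℓ hlt
  have : m = ℓ := by exact_mod_cast hℓ
  subst this
  refine ⟨?_, hc⟩
  have : retA ξ N 0 ω = (0 : ℕ∞) := rfl
  rw [this] at hlt
  exact_mod_cast hlt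

lemma retA_shift {m : ℕ} (h1 : retA ξ N 1 ω = (m : ℕ∞)) :
    ∀ k, retA ξ N (k + 1) ω = (m : ℕ∞) + retA (shiftF ξ m) N k ω := by
  have hm : cgw ξ N m ω = N := (retA_one_mem h1).2
  intro k
  induction k with
  | zero =>
    show retA ξ N 1 ω = (m : ℕ∞) + 0
    rw [add_zero]; exact h1
  | succ k ih =>
    cases hb : retA (shiftF ξ m) N k ω using ENat.recTopCoe with
    | top =>
      rw [retA_top_succ (by rw [ih, hb]; simp), retA_top_succ hb]
      simp
    | coe a =>
      rw [retA_succ_def, ih, hb, retA_succ_def (ξ := shiftF ξ m), hb]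
      have : (m : ℕ∞) + (a : ℕ∞) = ((m + a : ℕ) : ℕ∞) := by push_cast; rfl
      rw [this]
      exact sInf_shift fun s => by rw [cgw_shift hm s]

end shift

section TTchar

variable {Ω : Type*} {ξ : ℕ × ℕ → Ω → ℕ} {N : ℕ} {ω : Ω}

lemma retA_zero : retA ξ N 0 ω = 0 := rfl

lemma TT_eq_iff {k : ℕ} :
    TT ξ N ω = (k : ℕ∞) ↔ retA ξ N k ω < ⊤ ∧ retA ξ N (k + 1) ω = ⊤ := by
  set S := {t : ℕ∞ | ∃ j : ℕ, t = (j : ℕ∞) ∧ retA ξ N j ω < ⊤} with hS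
  have hTT : TT ξ N ω = sSup S := rfl
  constructor
  · intro h
    have hub : ∀ j : ℕ, retA ξ N j ω < ⊤ → (j : ℕ∞) ≤ (k : ℕ∞) := by
      intro j hj
      have hle : (j : ℕ∞) ≤ sSup S := le_sSup ⟨j, rfl, hj⟩
      rwa [← hTT, h] at hle
    constructor
    · by_contra hc
      have hktop : retA ξ N k ω = ⊤ := top_le_iff.mp (not_lt.mp hc)
      cases k with
      | zero => exact hc (by rw [retA_zero]; simp)
      | succ k' =>
        have hsup : sSup S ≤ (k' : ℕ∞) := by
          apply sSup_le
          rintro t ⟨j, rfl, hj⟩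
          have hjk : j ≤ k' := by
            by_contra hjk
            have h2 : retA ξ N (k' + 1) ω ≤ retA ξ N j ω := retA_mono (by omega)
            rw [hktop] at h2
            exact absurd (lt_of_le_of_lt h2 hj) (lt_irrefl _)
          exact_mod_cast hjk
        rw [← hTT, h] at hsup
        exact absurd (by exact_mod_cast hsup : k' + 1 ≤ k') (by omega)
    · by_contra hc
      have := hub (k + 1) (lt_top_iff_ne_top.mpr hc)
      exact absurd (by exact_mod_cast this : k + 1 ≤ k) (by omega)
  · rintro ⟨h1, h2⟩
    rw [hTT]
    apply le_antisymm
    · apply sSup_le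
      rintro t ⟨j, rfl, hj⟩
      have hjk : j ≤ k := by
        by_contra hc
        have h3 : retA ξ N (k + 1) ω ≤ retA ξ N j ω := retA_mono (by omega)
        rw [h2] at h3
        exact absurd (lt_of_le_of_lt h3 hj) (lt_irrefl _)
      exact_mod_cast hjk
    · exact le_sSup ⟨k, rfl, h1⟩

lemma retA_one_top_iff : retA ξ N 1 ω = ⊤ ↔ ∀ k > 0, cgw ξ N k ω < N := by
  rw [retA_succ_def 0, sInf_eq_top]
  constructor
  · intro h k hk
    refine lt_of_le_of_ne (cgw_le ξ N k ω) fun hc => ?_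
    have : ((k : ℕ∞)) = ⊤ := h _ ⟨by rw [retA_zero]; exact_mod_cast hk, k, rfl, hc⟩
    simp at this
  · rintro h t ⟨hlt, ℓ, rfl, hc⟩
    rw [retA_zero] at hlt
    have hℓ : 0 < ℓ := by exact_mod_cast hlt
    exact absurd hc (ne_of_lt (h ℓ hℓ))

end TTchar

section measurePart

variable {Ω : Type*} [MeasurableSpace Ω] {μ : Measure Ω} {pX : Measure ℕ}
  {ξ : ℕ × ℕ → Ω → ℕ} {N : ℕ}

/-- The set of "admissible coordinate patterns" for the event `retA · N k · = m`. -/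
def VV (N k m : ℕ) : Set (ℕ × ℕ → ℕ) :=
  {v | (∀ p : ℕ × ℕ, ¬(p.1 < m ∧ p.2 < N) → v p = 0)
    ∧ retA (fun p (_ : Unit) => v p) N k () = (m : ℕ∞)}

def SQ (m N : ℕ) : Finset (ℕ × ℕ) := Finset.range m ×ˢ Finset.range N

lemma mem_SQ {m N : ℕ} {p : ℕ × ℕ} : p ∈ SQ m N ↔ p.1 < m ∧ p.2 < N := by
  simp [SQ, Finset.mem_product]

lemma event_eq_biUnion (ξ : ℕ × ℕ → Ω → ℕ) (N k m : ℕ) :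
    {ω | retA ξ N k ω = (m : ℕ∞)}
      = ⋃ v ∈ VV N k m, ⋂ p ∈ SQ m N, ξ p ⁻¹' {v p} := by
  classical
  ext ω
  simp only [Set.mem_setOf_eq, Set.mem_iUnion, Set.mem_iInter, Set.mem_preimage,
    Set.mem_singleton_iff, exists_prop]
  constructor
  · intro h
    refine ⟨fun p => if p.1 < m ∧ p.2 < N then ξ p ω else 0,
      ⟨fun p hp => if_neg hp, ?_⟩, fun p hp => (if_pos (mem_SQ.mp hp)).symm⟩
    have hag : ∀ j < m, ∀ i < N, ξ (j, i) ω
        = (fun (p : ℕ × ℕ) (_ : Unit) => if p.1 < m ∧ p.2 < N then ξ p ω else 0) (j, i) () := by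
      intro j hj i hi
      simp [hj, hi]
    exact (retA_eq_iff_of_agree hag k).mp h
  · rintro ⟨v, ⟨hsupp, hret⟩, hatom⟩
    have hag : ∀ j < m, ∀ i < N, ξ (j, i) ω = (fun (p : ℕ × ℕ) (_ : Unit) => v p) (j, i) () :=
      fun j hj i hi => hatom (j, i) (mem_SQ.mpr ⟨hj, hi⟩)
    exact (retA_eq_iff_of_agree hag k).mpr hret

lemma countable_VV (N k m : ℕ) : (VV N k m).Countable := by
  rw [← Set.countable_coe_iff]
  have hinj : Function.Injective
      (fun (v : VV N k m) (q : Fin m × Fin N) => (v : ℕ × ℕ → ℕ) (q.1.val, q.2.val)) := by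
    rintro ⟨v, hv⟩ ⟨w, hw⟩ h
    apply Subtype.ext
    funext p
    show v p = w p
    by_cases hp : p.1 < m ∧ p.2 < N
    · have := congrFun h (⟨p.1, hp.1⟩, ⟨p.2, hp.2⟩)
      simpa using this
    · rw [hv.1 p hp, hw.1 p hp]
  exact hinj.countable

lemma atoms_disjoint (ξ : ℕ × ℕ → Ω → ℕ) (N k m : ℕ) :
    (VV N k m).PairwiseDisjoint (fun v => ⋂ p ∈ SQ m N, ξ p ⁻¹' {v p}) := by
  rintro v hv w hw hvw
  rw [Function.onFun, Set.disjoint_left]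
  rintro ω hω1 hω2
  apply hvw
  simp only [Set.mem_iInter, Set.mem_preimage, Set.mem_singleton_iff] at hω1 hω2
  funext p
  by_cases hp : p.1 < m ∧ p.2 < N
  · rw [← hω1 p (mem_SQ.mpr hp), ← hω2 p (mem_SQ.mpr hp)]
  · rw [hv.1 p hp, hw.1 p hp]

lemma atom_measurable (hmeas : ∀ p, Measurable (ξ p)) (S : Finset (ℕ × ℕ)) (v : ℕ × ℕ → ℕ) :
    MeasurableSet (⋂ p ∈ S, ξ p ⁻¹' {v p}) :=
  MeasurableSet.biInter S.countable_toSet fun p _ => (hmeas p) (measurableSet_singleton _)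

lemma event_measurable (hmeas : ∀ p, Measurable (ξ p)) (N k m : ℕ) :
    MeasurableSet {ω | retA ξ N k ω = (m : ℕ∞)} := by
  rw [event_eq_biUnion]
  exact MeasurableSet.biUnion (countable_VV N k m) fun v _ => atom_measurable hmeas _ _

def AtomLaw (μ : Measure Ω) (pX : Measure ℕ) (ξ : ℕ × ℕ → Ω → ℕ) : Prop :=
  ∀ (S : Finset (ℕ × ℕ)) (v : ℕ × ℕ → ℕ), μ (⋂ p ∈ S, ξ p ⁻¹' {v p}) = ∏ p ∈ S, pX {v p}

lemma atomLaw_of (hmeas : ∀ p, Measurable (ξ p))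
    (hindep : iIndepFun ξ μ)
    (hlaw : ∀ p, Measure.map (ξ p) μ = pX) : AtomLaw μ pX ξ := by
  intro S v
  rw [hindep.measure_inter_preimage_eq_mul S
    (sets := fun p => {v p}) (fun p _ => measurableSet_singleton _)]
  refine Finset.prod_congr rfl fun p _ => ?_
  rw [← hlaw p, Measure.map_apply (hmeas p) (measurableSet_singleton _)]

lemma AtomLaw.shift (h : AtomLaw μ pX ξ) (m : ℕ) : AtomLaw μ pX (shiftF ξ m) := by
  intro S v
  classical
  have einj : Function.Injective (fun p : ℕ × ℕ => (p.1 + m, p.2)) := by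
    rintro ⟨a, b⟩ ⟨c, d⟩ hcd
    simp only [Prod.mk.injEq] at hcd
    exact Prod.ext (by omega) hcd.2
  set e : ℕ × ℕ ↪ ℕ × ℕ := ⟨fun p => (p.1 + m, p.2), einj⟩ with he
  set w : ℕ × ℕ → ℕ := fun q => v (q.1 - m, q.2) with hw
  have hwev : ∀ p : ℕ × ℕ, w (e p) = v p := by
    rintro ⟨a, b⟩; simp [he, hw]
  have hset : (⋂ p ∈ S, shiftF ξ m p ⁻¹' {v p}) = ⋂ q ∈ S.map e, ξ q ⁻¹' {w q} := by
    ext ω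
    simp only [Set.mem_iInter, Finset.mem_map, Set.mem_preimage, Set.mem_singleton_iff, shiftF]
    constructor
    · rintro hq q ⟨p, hp, rfl⟩
      rw [hwev p]
      exact hq p hp
    · intro hq p hp
      have := hq (e p) ⟨p, hp, rfl⟩
      rw [hwev p] at this
      exact this
  rw [hset, h (S.map e) w, Finset.prod_map]
  exact Finset.prod_congr rfl fun p _ => by rw [hwev p]

lemma prob_retA_eq_tsum (hmeas : ∀ p, Measurable (ξ p)) (hatom : AtomLaw μ pX ξ) (k m : ℕ) :
    μ {ω | retA ξ N k ω = (m : ℕ∞)}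
      = ∑' v : (VV N k m), ∏ p ∈ SQ m N, pX {(v : ℕ × ℕ → ℕ) p} := by
  rw [event_eq_biUnion, measure_biUnion (countable_VV N k m) (atoms_disjoint ξ N k m)
    (fun v _ => atom_measurable hmeas _ _)]
  exact tsum_congr fun v => hatom _ _

lemma prob_retA_eq_of_atomLaw {ξ' : ℕ × ℕ → Ω → ℕ}
    (hmeas : ∀ p, Measurable (ξ p)) (hatom : AtomLaw μ pX ξ)
    (hmeas' : ∀ p, Measurable (ξ' p)) (hatom' : AtomLaw μ pX ξ') (k m : ℕ) :
    μ {ω | retA ξ N k ω = (m : ℕ∞)} = μ {ω | retA ξ' N k ω = (m : ℕ∞)} := by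
  rw [prob_retA_eq_tsum hmeas hatom k m, prob_retA_eq_tsum hmeas' hatom' k m]

end measurePart

section markov

variable {Ω : Type*} [MeasurableSpace Ω] {μ : Measure Ω} [IsProbabilityMeasure μ]
  {pX : Measure ℕ} {ξ : ℕ × ℕ → Ω → ℕ} {N : ℕ}

lemma lt_top_event_eq (ξ : ℕ × ℕ → Ω → ℕ) (N k : ℕ) :
    {ω | retA ξ N k ω < ⊤} = ⋃ m : ℕ, {ω | retA ξ N k ω = (m : ℕ∞)} := by
  ext ω
  simp only [Set.mem_setOf_eq, Set.mem_iUnion]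
  constructor
  · intro h
    cases hx : retA ξ N k ω with
    | top => rw [hx] at h; exact absurd h (lt_irrefl _)
    | coe n => exact ⟨n, rfl⟩
  · rintro ⟨m, hm⟩
    rw [hm]
    exact WithTop.coe_lt_top m

lemma retA_eq_pairwise_disjoint (ξ : ℕ × ℕ → Ω → ℕ) (N k : ℕ) :
    Pairwise (Function.onFun Disjoint fun m : ℕ => {ω | retA ξ N k ω = (m : ℕ∞)}) := by
  intro m m' hne
  rw [Function.onFun, Set.disjoint_left]
  rintro ω h1 h2
  simp only [Set.mem_setOf_eq] at h1 h2
  rw [h1] at h2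
  exact hne (by exact_mod_cast h2)

lemma lt_top_measurable (hmeas : ∀ p, Measurable (ξ p)) (k : ℕ) :
    MeasurableSet {ω | retA ξ N k ω < ⊤} := by
  rw [lt_top_event_eq]
  exact MeasurableSet.iUnion fun m => event_measurable hmeas N k m

lemma prob_lt_top_eq_of_atomLaw {ξ' : ℕ × ℕ → Ω → ℕ}
    (hmeas : ∀ p, Measurable (ξ p)) (hatom : AtomLaw μ pX ξ)
    (hmeas' : ∀ p, Measurable (ξ' p)) (hatom' : AtomLaw μ pX ξ') (k : ℕ) :
    μ {ω | retA ξ N k ω < ⊤} = μ {ω | retA ξ' N k ω < ⊤} := by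
  rw [lt_top_event_eq, lt_top_event_eq,
    measure_iUnion (retA_eq_pairwise_disjoint ξ N k) (fun m => event_measurable hmeas N k m),
    measure_iUnion (retA_eq_pairwise_disjoint ξ' N k) (fun m => event_measurable hmeas' N k m)]
  exact tsum_congr fun m => prob_retA_eq_of_atomLaw hmeas hatom hmeas' hatom' k m

lemma indep_first_return (hmeas : ∀ p, Measurable (ξ p))
    (hindep : iIndepFun ξ μ) (k m : ℕ) :
    μ ({ω | retA ξ N 1 ω = (m : ℕ∞)} ∩ {ω | retA (shiftF ξ m) N k ω < ⊤})
      = μ {ω | retA ξ N 1 ω = (m : ℕ∞)} * μ {ω | retA (shiftF ξ m) N k ω < ⊤} := by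
  set M1 := ⨆ p ∈ {p : ℕ × ℕ | p.1 < m}, MeasurableSpace.comap (ξ p) inferInstance with hM1
  set M2 := ⨆ p ∈ {p : ℕ × ℕ | m ≤ p.1}, MeasurableSpace.comap (ξ p) inferInstance with hM2
  have hdisj : Disjoint {p : ℕ × ℕ | p.1 < m} {p : ℕ × ℕ | m ≤ p.1} := by
    rw [Set.disjoint_left]
    intro p hp hp'
    simp only [Set.mem_setOf_eq] at hp hp'
    omega
  have hIndep : Indep M1 M2 μ :=
    indep_iSup_of_disjoint (fun p => (hmeas p).comap_le) hindep.iIndep hdisj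
  have hE : MeasurableSet[M1] {ω | retA ξ N 1 ω = (m : ℕ∞)} := by
    rw [event_eq_biUnion]
    refine MeasurableSet.biUnion (countable_VV N 1 m) fun v _ => ?_
    refine MeasurableSet.biInter (SQ m N).countable_toSet fun p hp => ?_
    have h1 : MeasurableSet[MeasurableSpace.comap (ξ p) inferInstance] (ξ p ⁻¹' {v p}) :=
      ⟨{v p}, measurableSet_singleton _, rfl⟩
    have hle : MeasurableSpace.comap (ξ p) inferInstance ≤ M1 := by
      rw [hM1]
      exact le_iSup₂ (f := fun (p : ℕ × ℕ) (_ : p ∈ {p : ℕ × ℕ | p.1 < m}) =>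
        MeasurableSpace.comap (ξ p) inferInstance) p (mem_SQ.mp hp).1
    exact hle _ h1
  have hF : MeasurableSet[M2] {ω | retA (shiftF ξ m) N k ω < ⊤} := by
    rw [lt_top_event_eq]
    refine MeasurableSet.iUnion fun t => ?_
    rw [event_eq_biUnion]
    refine MeasurableSet.biUnion (countable_VV N k t) fun v _ => ?_
    refine MeasurableSet.biInter (SQ t N).countable_toSet fun p _ => ?_
    have h1 : MeasurableSet[MeasurableSpace.comap (ξ (p.1 + m, p.2)) inferInstance]
        (shiftF ξ m p ⁻¹' {v p}) := ⟨{v p}, measurableSet_singleton _, rfl⟩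
    have hle : MeasurableSpace.comap (ξ (p.1 + m, p.2)) inferInstance ≤ M2 := by
      rw [hM2]
      exact le_iSup₂ (f := fun (q : ℕ × ℕ) (_ : q ∈ {q : ℕ × ℕ | m ≤ q.1}) =>
        MeasurableSpace.comap (ξ q) inferInstance) (p.1 + m, p.2) (by simp)
    exact hle _ h1
  exact (Indep_iff M1 M2 μ).mp hIndep _ _ hE hF

end markov

section main

variable {Ω : Type*} [MeasurableSpace Ω] {μ : Measure Ω} [IsProbabilityMeasure μ]
  {pX : Measure ℕ} {ξ : ℕ × ℕ → Ω → ℕ} {N : ℕ}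

lemma decomp_succ (ξ : ℕ × ℕ → Ω → ℕ) (N k : ℕ) :
    {ω | retA ξ N (k + 1) ω < ⊤}
      = ⋃ m : ℕ, ({ω | retA ξ N 1 ω = (m : ℕ∞)} ∩ {ω | retA (shiftF ξ m) N k ω < ⊤}) := by
  ext ω
  simp only [Set.mem_setOf_eq, Set.mem_iUnion, Set.mem_inter_iff]
  constructor
  · intro h
    have h1 : retA ξ N 1 ω < ⊤ := lt_of_le_of_lt (retA_mono (by omega)) h
    cases hm : retA ξ N 1 ω with
    | top => rw [hm] at h1; exact absurd h1 (lt_irrefl _)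
    | coe m =>
      refine ⟨m, rfl, ?_⟩
      rw [retA_shift hm k] at h
      by_contra hc
      rw [top_le_iff.mp (not_lt.mp hc), add_top] at h
      exact absurd h (lt_irrefl _)
  · rintro ⟨m, h1, h2⟩
    rw [retA_shift h1 k]
    cases hb : retA (shiftF ξ m) N k ω with
    | top => rw [hb] at h2; exact absurd h2 (lt_irrefl _)
    | coe b =>
      rw [← Nat.cast_add]
      exact WithTop.coe_lt_top (m + b)

lemma c_succ (hmeas : ∀ p, Measurable (ξ p))
    (hindep : iIndepFun ξ μ)
    (hatom : AtomLaw μ pX ξ) (k : ℕ) :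
    μ {ω | retA ξ N (k + 1) ω < ⊤}
      = μ {ω | retA ξ N 1 ω < ⊤} * μ {ω | retA ξ N k ω < ⊤} := by
  rw [decomp_succ ξ N k]
  have hdisjm : Pairwise (Function.onFun Disjoint fun m : ℕ =>
      ({ω | retA ξ N 1 ω = (m : ℕ∞)} ∩ {ω | retA (shiftF ξ m) N k ω < ⊤})) := by
    intro m m' hne
    exact Disjoint.mono Set.inter_subset_left Set.inter_subset_left
      (retA_eq_pairwise_disjoint ξ N 1 hne)
  rw [measure_iUnion hdisjm (fun m => (event_measurable hmeas N 1 m).inter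
    (lt_top_measurable (fun p => hmeas _) k))]
  have hstep : ∀ m : ℕ,
      μ ({ω | retA ξ N 1 ω = (m : ℕ∞)} ∩ {ω | retA (shiftF ξ m) N k ω < ⊤})
        = μ {ω | retA ξ N 1 ω = (m : ℕ∞)} * μ {ω | retA ξ N k ω < ⊤} := by
    intro m
    rw [indep_first_return hmeas hindep k m]
    congr 1
    exact prob_lt_top_eq_of_atomLaw (fun p => hmeas _) (hatom.shift m) hmeas hatom k
  calc ∑' m : ℕ, μ ({ω | retA ξ N 1 ω = (m : ℕ∞)} ∩ {ω | retA (shiftF ξ m) N k ω < ⊤})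
      = ∑' m : ℕ, μ {ω | retA ξ N 1 ω = (m : ℕ∞)} * μ {ω | retA ξ N k ω < ⊤} :=
        tsum_congr hstep
    _ = (∑' m : ℕ, μ {ω | retA ξ N 1 ω = (m : ℕ∞)}) * μ {ω | retA ξ N k ω < ⊤} :=
        ENNReal.tsum_mul_right
    _ = μ {ω | retA ξ N 1 ω < ⊤} * μ {ω | retA ξ N k ω < ⊤} := by
        rw [← measure_iUnion (retA_eq_pairwise_disjoint ξ N 1)
          (fun m => event_measurable hmeas N 1 m), ← lt_top_event_eq]

lemma c_pow (hmeas : ∀ p, Measurable (ξ p))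
    (hindep : iIndepFun ξ μ)
    (hatom : AtomLaw μ pX ξ) (k : ℕ) :
    μ {ω | retA ξ N k ω < ⊤} = (μ {ω | retA ξ N 1 ω < ⊤}) ^ k := by
  induction k with
  | zero =>
    have : {ω : Ω | retA ξ N 0 ω < ⊤} = Set.univ := by
      ext ω; simp [retA_zero]
    rw [this, pow_zero, measure_univ]
  | succ k ih =>
    rw [c_succ hmeas hindep hatom k, ih, pow_succ]
    ring

end main


/-- the number `T` of finite return times to `N` satisfies
`P(T = k) = (1 - q_N)^k q_N`, i.e. `T + 1` is geometric with parameter `q_N`. -/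
theorem stmt11
    {Ω : Type*} [MeasurableSpace Ω] (μ : Measure Ω) [IsProbabilityMeasure μ]
    (pX : Measure ℕ) [IsProbabilityMeasure pX]
    (hmean : 1 < ∑' n : ℕ, (n : ℝ≥0∞) * pX {n})
    (h0 : 0 < pX {0})
    (ξ : ℕ × ℕ → Ω → ℕ)
    (hmeas : ∀ p, Measurable (ξ p))
    (hindep : iIndepFun ξ μ)
    (hlaw : ∀ p, Measure.map (ξ p) μ = pX)
    (N : ℕ) (hN : 2 ≤ N)
    (qN : ℝ)
    (hqN : qN = (μ {ω | ∀ k > 0, cgw ξ N k ω < N}).toReal) :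
    ∀ k : ℕ, μ {ω | TT ξ N ω = (k : ℕ∞)} = ENNReal.ofReal ((1 - qN) ^ k * qN) := by
  intro k
  have hatom : AtomLaw μ pX ξ := atomLaw_of hmeas hindep hlaw
  set c1 := μ {ω | retA ξ N 1 ω < ⊤} with hc1
  have hcpow : ∀ j, μ {ω | retA ξ N j ω < ⊤} = c1 ^ j :=
    fun j => c_pow hmeas hindep hatom j
  have hTTset : {ω | TT ξ N ω = (k : ℕ∞)}
      = {ω | retA ξ N k ω < ⊤} \ {ω | retA ξ N (k + 1) ω < ⊤} := by
    ext ω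
    simp only [Set.mem_setOf_eq, Set.mem_diff]
    rw [TT_eq_iff]
    constructor
    · rintro ⟨h1, h2⟩
      exact ⟨h1, by rw [h2]; exact lt_irrefl _⟩
    · rintro ⟨h1, h2⟩
      exact ⟨h1, top_le_iff.mp (not_lt.mp h2)⟩
  have hsub : {ω | retA ξ N (k + 1) ω < ⊤} ⊆ {ω | retA ξ N k ω < ⊤} :=
    fun ω h => lt_of_le_of_lt (retA_le_succ k) h
  rw [hTTset, measure_diff hsub (lt_top_measurable hmeas (k + 1)).nullMeasurableSet
    (measure_ne_top μ _), hcpow k, hcpow (k + 1)]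
  -- identify qN
  have hq_event : {ω | ∀ j > 0, cgw ξ N j ω < N} = {ω | retA ξ N 1 ω < ⊤}ᶜ := by
    ext ω
    simp only [Set.mem_setOf_eq, Set.mem_compl_iff, not_lt, top_le_iff]
    exact Iff.symm retA_one_top_iff
  have hqval : μ {ω | ∀ j > 0, cgw ξ N j ω < N} = 1 - c1 := by
    rw [hq_event, prob_compl_eq_one_sub (lt_top_measurable hmeas 1)]
  have hc1le : c1 ≤ 1 := prob_le_one
  have hc1ne : c1 ≠ ⊤ := (lt_of_le_of_lt hc1le ENNReal.one_lt_top).ne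
  have h1c : (1 - c1).toReal = 1 - c1.toReal := by
    rw [ENNReal.toReal_sub_of_le hc1le ENNReal.one_ne_top, ENNReal.toReal_one]
  rw [hqN, hqval, h1c]
  have h2 : (1 : ℝ) - (1 - c1.toReal) = c1.toReal := by ring
  rw [h2, ENNReal.ofReal_mul (by positivity), ENNReal.ofReal_pow ENNReal.toReal_nonneg,
    ENNReal.ofReal_toReal hc1ne, ← h1c,
    ENNReal.ofReal_toReal (by simp : (1 : ℝ≥0∞) - c1 ≠ ⊤)]
  rw [ENNReal.mul_sub (fun _ _ => ENNReal.pow_ne_top hc1ne)]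
  rw [mul_one, pow_succ]
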